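/- Let A ∈ ℝ^{n×d} (n, d ≥ 1), b ∈ ℝ^n, λ > 0 and q > 0. Define Ψ_q : ℝ → ℝ by Ψ_q(x) = (k + 1/2)·q·(|x| − kq) + k²q²/2 with k = ⌊|x|/q⌋, and define F_PAR(x) = (1/(2n))‖Ax − b‖² + λ Σ_{i=1}^d Ψ_q(x_i) and F_ridge(x) = (1/(2n))‖Ax − b‖² + (λ/2)‖x‖². Let x_PAR be a global minimizer of F_PAR and let x_ridge be a global minimizer of F_ridge. Then ‖x_PAR − x_ridge‖ ≤ √(d/2)·q and ‖x_PAR − x_ridge‖_Σ̂ ≤ √(dλ/2)·q, where ‖v‖_Σ̂ := √((1/n)‖Av‖²) is the Mahalanobis seminorm associated with the sample covariance matrix Σ̂ = (1/n)AᵀA. -/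
import Mathlib


/-- The piecewise-affine regularizer with quantization values `Q = {0, ±q, ±2q, …}`
that interpolates the quadratic `x²/2` at the grid points: with `k = ⌊|x|/q⌋`,
`Ψ_q(x) = (k + 1/2)·q·(|x| − kq) + k²q²/2`. -/
noncomputable def quadPAR (q : ℝ) (x : ℝ) : ℝ :=
  ((⌊|x| / q⌋₊ : ℝ) + 1 / 2) * q * (|x| - (⌊|x| / q⌋₊ : ℝ) * q) +
    (⌊|x| / q⌋₊ : ℝ) ^ 2 * q ^ 2 / 2

lemma quadPAR_lower (q : ℝ) (hq : 0 < q) (x : ℝ) : x ^ 2 / 2 ≤ quadPAR q x := by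
  have h1 : (⌊|x| / q⌋₊ : ℝ) * q ≤ |x| := by
    have := Nat.floor_le (div_nonneg (abs_nonneg x) hq.le)
    calc (⌊|x| / q⌋₊ : ℝ) * q ≤ (|x| / q) * q := by nlinarith
      _ = |x| := by field_simp
  have h2 : |x| < ((⌊|x| / q⌋₊ : ℝ) + 1) * q := by
    have := Nat.lt_floor_add_one (|x| / q)
    calc |x| = (|x| / q) * q := by field_simp
      _ < ((⌊|x| / q⌋₊ : ℝ) + 1) * q := by nlinarith
  have hx2 : x ^ 2 = |x| ^ 2 := (sq_abs x).symm
  unfold quadPAR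
  nlinarith [mul_nonneg (by linarith : (0:ℝ) ≤ |x| - (⌊|x| / q⌋₊ : ℝ) * q)
    (by linarith : (0:ℝ) ≤ ((⌊|x| / q⌋₊ : ℝ) + 1) * q - |x|)]

lemma quadPAR_upper (q : ℝ) (hq : 0 < q) (x : ℝ) : quadPAR q x ≤ x ^ 2 / 2 + q ^ 2 / 8 := by
  have h1 : (⌊|x| / q⌋₊ : ℝ) * q ≤ |x| := by
    have := Nat.floor_le (div_nonneg (abs_nonneg x) hq.le)
    calc (⌊|x| / q⌋₊ : ℝ) * q ≤ (|x| / q) * q := by nlinarith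
      _ = |x| := by field_simp
  have hx2 : x ^ 2 = |x| ^ 2 := (sq_abs x).symm
  unfold quadPAR
  nlinarith [sq_nonneg (q - 2 * (|x| - (⌊|x| / q⌋₊ : ℝ) * q))]

/-- Theorem 4.1: the PAR-regularized least-squares solution is close to
the ridge solution, both in Euclidean norm and in the Mahalanobis seminorm
`‖v‖_Σ̂ = √((1/n)‖Av‖²)` associated with the sample covariance `Σ̂ = (1/n)AᵀA`,
with both bounds proportional to the quantization gap `q`. -/
theorem par_close_to_ridge
    (n d : ℕ) (hn : 0 < n) (hd : 0 < d)
    (A : Matrix (Fin n) (Fin d) ℝ) (b : Fin n → ℝ)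
    (lam : ℝ) (hlam : 0 < lam) (q : ℝ) (hq : 0 < q)
    (FPAR Fridge : (Fin d → ℝ) → ℝ)
    (hFPAR : ∀ x, FPAR x =
      (1 / (2 * n)) * ∑ i, (A.mulVec x i - b i) ^ 2 + lam * ∑ i, quadPAR q (x i))
    (hFridge : ∀ x, Fridge x =
      (1 / (2 * n)) * ∑ i, (A.mulVec x i - b i) ^ 2 + (lam / 2) * ∑ i, (x i) ^ 2)
    (xPAR : Fin d → ℝ) (hxPAR : ∀ y, FPAR xPAR ≤ FPAR y)
    (xridge : Fin d → ℝ) (hxridge : ∀ y, Fridge xridge ≤ Fridge y) :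
    Real.sqrt (∑ i, (xPAR i - xridge i) ^ 2) ≤ Real.sqrt ((d : ℝ) / 2) * q ∧
    Real.sqrt ((1 / n) * ∑ i, (A.mulVec (xPAR - xridge) i) ^ 2) ≤
      Real.sqrt ((d : ℝ) * lam / 2) * q := by
  have hN : (0:ℝ) < (n:ℝ) := by exact_mod_cast hn
  set u := A.mulVec xPAR with hu
  set v := A.mulVec xridge with hv
  set m : Fin d → ℝ := fun i => (xPAR i + xridge i) / 2 with hmdef
  have hm : ∀ i, A.mulVec m i = (u i + v i) / 2 := by
    intro i
    simp only [hu, hv, Matrix.mulVec, dotProduct, hmdef]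
    rw [← Finset.sum_add_distrib, Finset.sum_div]
    exact Finset.sum_congr rfl fun j _ => by ring
  set SA := ∑ i, (u i - v i) ^ 2 with hSA
  set TD := ∑ i, (xPAR i - xridge i) ^ 2 with hTD
  have hSAnn : 0 ≤ SA := Finset.sum_nonneg fun i _ => sq_nonneg _
  have hTDnn : 0 ≤ TD := Finset.sum_nonneg fun i _ => sq_nonneg _
  -- midpoint identities
  have hSm : ∑ i, (A.mulVec m i - b i) ^ 2 =
      (∑ i, (u i - b i) ^ 2) / 2 + (∑ i, (v i - b i) ^ 2) / 2 - SA / 4 := by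
    rw [hSA, Finset.sum_div, Finset.sum_div, Finset.sum_div,
      ← Finset.sum_add_distrib, ← Finset.sum_sub_distrib]
    refine Finset.sum_congr rfl fun i _ => ?_
    rw [hm i]; ring
  have hTm : ∑ i, (m i) ^ 2 =
      (∑ i, (xPAR i) ^ 2) / 2 + (∑ i, (xridge i) ^ 2) / 2 - TD / 4 := by
    rw [hTD, Finset.sum_div, Finset.sum_div, Finset.sum_div,
      ← Finset.sum_add_distrib, ← Finset.sum_sub_distrib]
    refine Finset.sum_congr rfl fun i _ => ?_
    simp only [hmdef]; ring
  -- strong convexity at the midpoint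
  have hkey : (1 / (2 * (n:ℝ))) * (SA / 4) + (lam / 2) * (TD / 4) ≤
      (Fridge xPAR - Fridge xridge) / 2 := by
    have h := hxridge m
    rw [hFridge m, hFridge xridge, hSm, hTm] at h
    rw [hFridge xPAR, hFridge xridge]
    set c := (1 / (2 * (n:ℝ))) with hc
    nlinarith [h]
  -- comparing F_PAR and F_ridge
  have hlow : Fridge xPAR ≤ FPAR xPAR := by
    rw [hFridge xPAR, hFPAR xPAR]
    have : (lam / 2) * ∑ i, (xPAR i) ^ 2 ≤ lam * ∑ i, quadPAR q (xPAR i) := by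
      have h1 : (∑ i, (xPAR i) ^ 2) / 2 ≤ ∑ i, quadPAR q (xPAR i) := by
        rw [Finset.sum_div]
        exact Finset.sum_le_sum fun i _ => quadPAR_lower q hq (xPAR i)
      calc (lam / 2) * ∑ i, (xPAR i) ^ 2 = lam * ((∑ i, (xPAR i) ^ 2) / 2) := by ring
        _ ≤ lam * ∑ i, quadPAR q (xPAR i) := by
            exact mul_le_mul_of_nonneg_left h1 hlam.le
    linarith
  have hup : FPAR xridge ≤ Fridge xridge + lam * ((d:ℝ) * q ^ 2 / 8) := by
    rw [hFridge xridge, hFPAR xridge]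
    have h1 : ∑ i, quadPAR q (xridge i) ≤ (∑ i, (xridge i) ^ 2) / 2 + (d:ℝ) * q ^ 2 / 8 := by
      calc ∑ i, quadPAR q (xridge i) ≤ ∑ i : Fin d, ((xridge i) ^ 2 / 2 + q ^ 2 / 8) :=
            Finset.sum_le_sum fun i _ => quadPAR_upper q hq (xridge i)
        _ = (∑ i, (xridge i) ^ 2) / 2 + (d:ℝ) * q ^ 2 / 8 := by
            rw [Finset.sum_add_distrib, ← Finset.sum_div, Finset.sum_const,
              Finset.card_fin, nsmul_eq_mul]
            ring
    have := mul_le_mul_of_nonneg_left h1 hlam.le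
    linarith
  have hgap : Fridge xPAR - Fridge xridge ≤ lam * ((d:ℝ) * q ^ 2 / 8) :=
    by linarith [hxPAR xridge]
  have hmain : (1 / (2 * (n:ℝ))) * (SA / 4) + (lam / 2) * (TD / 4) ≤
      lam * (d:ℝ) * q ^ 2 / 16 := by linarith
  have hNpos : 0 < 1 / (2 * (n:ℝ)) := by positivity
  have hTDle : TD ≤ (d:ℝ) / 2 * q ^ 2 := by
    nlinarith [mul_nonneg hNpos.le (by linarith : (0:ℝ) ≤ SA / 4)]
  have hSAle : (1 / (n:ℝ)) * SA ≤ (d:ℝ) * lam / 2 * q ^ 2 := by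
    have h8 : (1 / (2 * (n:ℝ))) * (SA / 4) = ((1 / (n:ℝ)) * SA) / 8 := by
      rw [one_div, one_div, mul_inv, div_eq_mul_inv, div_eq_mul_inv]; ring
    nlinarith [mul_nonneg hlam.le hTDnn]
  constructor
  · calc Real.sqrt TD ≤ Real.sqrt ((d:ℝ) / 2 * q ^ 2) := Real.sqrt_le_sqrt hTDle
      _ = Real.sqrt ((d:ℝ) / 2) * q := by
          rw [Real.sqrt_mul (by positivity), Real.sqrt_sq hq.le]
  · have hsub : ∑ i, (A.mulVec (xPAR - xridge) i) ^ 2 = SA := by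
      rw [hSA]
      refine Finset.sum_congr rfl fun i _ => ?_
      rw [Matrix.mulVec_sub]
      simp [hu, hv]
    rw [hsub]
    calc Real.sqrt ((1 / (n:ℝ)) * SA) ≤ Real.sqrt ((d:ℝ) * lam / 2 * q ^ 2) :=
          Real.sqrt_le_sqrt hSAle
      _ = Real.sqrt ((d:ℝ) * lam / 2) * q := by
          rw [Real.sqrt_mul (by positivity), Real.sqrt_sq hq.le]
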